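/- arXiv:2211.04650 — 2 statements merged into one kernel-verified Lean document; each statement's English description precedes it below -/
import Mathlib

section
/- Let κ > 0 and let φ₁, φ₂ be continuous functions on a ray {r e^{iθ} : 0 < r} ⊂ ℂ satisfying |φᵢ(ξ)| ≤ Cᵢ |ξ|^{sᵢ−κ} e^{c|ξ|^κ}/Γ(sᵢ/κ) with sᵢ > 0, c ≥ 0, Cᵢ ≥ 0. Then their κ-convolution (φ₁ *_κ φ₂)(ξ) = ∫₀^{ξ} φ₁((ξ^κ − η^κ)^{1/κ}) φ₂(η) d(η^κ), taken along the ray, satisfies |(φ₁ *_κ φ₂)(ξ)| ≤ C₁C₂ |ξ|^{s₁+s₂−κ} e^{c|ξ|^κ}/Γ((s₁+s₂)/κ). -/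
open Real Complex MeasureTheory


/-- Real beta integral on `0..T`. -/
lemma beta_aux {a b T : ℝ} (ha : 0 < a) (hb : 0 < b) (hT : 0 < T) :
    ∫ u in (0:ℝ)..T, (T - u) ^ (a - 1) * u ^ (b - 1)
      = T ^ (a + b - 1) * (Real.Gamma a * Real.Gamma b) / Real.Gamma (a + b) := by
  have hre : (∫ u in (0:ℝ)..T, ((u:ℂ)) ^ ((b:ℂ) - 1) * ((T:ℂ) - u) ^ ((a:ℂ) - 1))
      = ((∫ u in (0:ℝ)..T, (T - u) ^ (a - 1) * u ^ (b - 1) : ℝ) : ℂ) := by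
    rw [← intervalIntegral.integral_ofReal]
    refine intervalIntegral.integral_congr_ae (MeasureTheory.ae_of_all _ fun u hu => ?_)
    rw [Set.uIoc_of_le hT.le] at hu
    have hu0 : 0 ≤ u := hu.1.le
    have huT : 0 ≤ T - u := sub_nonneg.2 hu.2
    rw [Complex.ofReal_mul, Complex.ofReal_cpow hu0, Complex.ofReal_cpow huT]
    push_cast
    ring
  have hscaled := Complex.betaIntegral_scaled (b:ℂ) (a:ℂ) hT
  have hGa : ((Real.Gamma b : ℂ)) * (Real.Gamma a : ℂ)
      = (Real.Gamma (b + a) : ℂ) * Complex.betaIntegral b a := by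
    rw [← Complex.Gamma_ofReal, ← Complex.Gamma_ofReal, ← Complex.Gamma_ofReal]
    push_cast
    exact Complex.Gamma_mul_Gamma_eq_betaIntegral (by simpa using hb) (by simpa using ha)
  have hΓab : Real.Gamma (b + a) ≠ 0 := (Real.Gamma_pos_of_pos (by linarith)).ne'
  have hΓc : ((Real.Gamma (b + a) : ℝ) : ℂ) ≠ 0 := by exact_mod_cast hΓab
  have hbeta : Complex.betaIntegral b a
      = ((Real.Gamma b * Real.Gamma a / Real.Gamma (b + a) : ℝ) : ℂ) := by
    push_cast
    rw [eq_div_iff hΓc]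
    linear_combination -hGa
  rw [hre, hbeta] at hscaled
  have hTc : ((T:ℂ)) ^ ((b:ℂ) + a - 1) = ((T ^ (b + a - 1) : ℝ) : ℂ) := by
    rw [Complex.ofReal_cpow hT.le]
    push_cast
    ring_nf
  rw [hTc, ← Complex.ofReal_mul] at hscaled
  have h2 := Complex.ofReal_injective hscaled
  rw [h2, show a + b - 1 = b + a - 1 by ring, show a + b = b + a by ring]
  ring

lemma beta_intable {a b T : ℝ} (ha : 0 < a) (hb : 0 < b) (hT : 0 < T) :
    IntervalIntegrable (fun u => (T - u) ^ (a - 1) * u ^ (b - 1)) volume 0 T := by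
  have h1 : IntervalIntegrable (fun u => (T - u) ^ (a - 1) * u ^ (b - 1)) volume 0 (T / 2) := by
    have hint : IntervalIntegrable (fun u : ℝ => u ^ (b - 1)) volume 0 (T / 2) :=
      intervalIntegral.intervalIntegrable_rpow' (by linarith)
    have hcont : ContinuousOn (fun u : ℝ => (T - u) ^ (a - 1)) (Set.uIcc 0 (T / 2)) := by
      apply (continuousOn_const.sub continuousOn_id).rpow_const
      intro x hx
      rw [Set.uIcc_of_le (by linarith)] at hx
      exact Or.inl (by simp only [Pi.sub_apply, id]; nlinarith [hx.2])
    simpa [mul_comm] using hint.mul_continuousOn hcont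
  have h2 : IntervalIntegrable (fun u => (T - u) ^ (a - 1) * u ^ (b - 1)) volume (T / 2) T := by
    have hint : IntervalIntegrable (fun u : ℝ => (T - u) ^ (a - 1)) volume (T / 2) T := by
      have := ((intervalIntegral.intervalIntegrable_rpow' (a := 0) (b := T / 2) (r := a - 1)
        (by linarith)).comp_sub_left T).symm
      rw [show T - T / 2 = T / 2 by ring] at this
      simpa using this
    have hcont : ContinuousOn (fun u : ℝ => u ^ (b - 1)) (Set.uIcc (T / 2) T) := by
      apply continuousOn_id.rpow_const
      intro x hx
      rw [Set.uIcc_of_le (by linarith)] at hx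
      exact Or.inl (by simp only [id]; nlinarith [hx.1])
    exact hint.mul_continuousOn hcont
  exact h1.trans h2

lemma rpow_image {κ t : ℝ} (hκ : 0 < κ) (ht : 0 < t) :
    (fun r : ℝ => r ^ κ) '' Set.Ioo 0 t = Set.Ioo 0 (t ^ κ) := by
  ext u
  constructor
  · rintro ⟨r, ⟨hr0, hrt⟩, rfl⟩
    exact ⟨Real.rpow_pos_of_pos hr0 κ, Real.rpow_lt_rpow hr0.le hrt hκ⟩
  · rintro ⟨hu0, hut⟩
    refine ⟨u ^ (1 / κ), ⟨Real.rpow_pos_of_pos hu0 _, ?_⟩, ?_⟩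
    · calc u ^ (1 / κ) < (t ^ κ) ^ (1 / κ) := Real.rpow_lt_rpow hu0.le hut (by positivity)
        _ = t := by
          rw [← Real.rpow_mul ht.le, mul_one_div_cancel hκ.ne', Real.rpow_one]
    · simp only []
      rw [← Real.rpow_mul hu0.le, one_div_mul_cancel hκ.ne', Real.rpow_one]


/-- Convolution estimate (Lemma on κ-convolution): if φ₁, φ₂ are continuous on the ray
{r e^{iθ} : r > 0} and satisfy |φᵢ(ξ)| ≤ Cᵢ|ξ|^{sᵢ−κ}e^{c|ξ|^κ}/Γ(sᵢ/κ), then the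
κ-convolution along the ray satisfies the corresponding bound with s₁ + s₂. -/
theorem stmt_1 (κ s₁ s₂ c C₁ C₂ : ℝ) (θ : ℝ)
    (hκ : 0 < κ) (hs₁ : 0 < s₁) (hs₂ : 0 < s₂) (hc : 0 ≤ c) (hC₁ : 0 ≤ C₁) (hC₂ : 0 ≤ C₂)
    (φ₁ φ₂ : ℂ → ℂ)
    (hcont₁ : ContinuousOn φ₁ {ξ : ℂ | ∃ r : ℝ, 0 < r ∧ ξ = r * Complex.exp (θ * Complex.I)})
    (hcont₂ : ContinuousOn φ₂ {ξ : ℂ | ∃ r : ℝ, 0 < r ∧ ξ = r * Complex.exp (θ * Complex.I)})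
    (hb₁ : ∀ r : ℝ, 0 < r →
      ‖φ₁ (r * Complex.exp (θ * Complex.I))‖ ≤ C₁ * r ^ (s₁ - κ) * Real.exp (c * r ^ κ)
        / Real.Gamma (s₁ / κ))
    (hb₂ : ∀ r : ℝ, 0 < r →
      ‖φ₂ (r * Complex.exp (θ * Complex.I))‖ ≤ C₂ * r ^ (s₂ - κ) * Real.exp (c * r ^ κ)
        / Real.Gamma (s₂ / κ)) :
    ∀ t : ℝ, 0 < t →
      ‖∫ r in (0:ℝ)..t,
          φ₁ (((t ^ κ - r ^ κ) ^ (1 / κ) : ℝ) * Complex.exp (θ * Complex.I))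
            * φ₂ ((r : ℝ) * Complex.exp (θ * Complex.I))
            * Complex.exp (κ * θ * Complex.I) * ((κ : ℂ) * (r : ℂ) ^ ((κ : ℂ) - 1))‖
        ≤ C₁ * C₂ * t ^ (s₁ + s₂ - κ) * Real.exp (c * t ^ κ)
            / Real.Gamma ((s₁ + s₂) / κ) := by
  intro t ht
  set T := t ^ κ with hTdef
  have hT : 0 < T := Real.rpow_pos_of_pos ht κ
  have hκ' : κ ≠ 0 := hκ.ne'
  set a := s₁ / κ with hadef
  set b := s₂ / κ with hbdef
  have ha : 0 < a := div_pos hs₁ hκ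
  have hb : 0 < b := div_pos hs₂ hκ
  have hΓa : 0 < Real.Gamma a := Real.Gamma_pos_of_pos ha
  have hΓb : 0 < Real.Gamma b := Real.Gamma_pos_of_pos hb
  have hΓab : 0 < Real.Gamma (a + b) := Real.Gamma_pos_of_pos (by positivity)
  set M := C₁ * C₂ * Real.exp (c * T) / (Real.Gamma a * Real.Gamma b) with hM
  have hM0 : 0 ≤ M := by positivity
  set g : ℝ → ℝ := fun u => (T - u) ^ (a - 1) * u ^ (b - 1) with hg
  set G : ℝ → ℝ := fun r => M * ((κ * r ^ (κ - 1)) * g (r ^ κ)) with hG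
  -- change of variables data
  have hderiv : ∀ r ∈ Set.Ioo (0:ℝ) t, HasDerivWithinAt (fun r : ℝ => r ^ κ)
      (κ * r ^ (κ - 1)) (Set.Ioo 0 t) r := fun r hr =>
    (Real.hasDerivAt_rpow_const (Or.inl hr.1.ne')).hasDerivWithinAt
  have hinj : Set.InjOn (fun r : ℝ => r ^ κ) (Set.Ioo 0 t) := by
    have hmono : StrictMonoOn (fun r : ℝ => r ^ κ) (Set.Ioo 0 t) :=
      fun x hx y _ hxy => Real.rpow_lt_rpow hx.1.le hxy hκ
    exact hmono.injOn
  have himg := integral_image_eq_integral_abs_deriv_smul measurableSet_Ioo hderiv hinj g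
  rw [rpow_image hκ ht] at himg
  have hgint : IntegrableOn g (Set.Ioo 0 T) := by
    have h := beta_intable ha hb hT
    rw [intervalIntegrable_iff, Set.uIoc_of_le hT.le] at h
    exact h.mono_set Set.Ioo_subset_Ioc_self
  have hGintIoo : IntegrableOn (fun r => |κ * r ^ (κ - 1)| • g (r ^ κ)) (Set.Ioo 0 t) :=
    (integrableOn_image_iff_integrableOn_abs_deriv_smul measurableSet_Ioo hderiv hinj g).mp
      (by rw [rpow_image hκ ht]; exact hgint)
  have habs : ∀ r ∈ Set.Ioo (0:ℝ) t, |κ * r ^ (κ - 1)| = κ * r ^ (κ - 1) :=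
    fun r hr => abs_of_pos (mul_pos hκ (Real.rpow_pos_of_pos hr.1 _))
  have hGint : IntervalIntegrable G volume 0 t := by
    rw [intervalIntegrable_iff, Set.uIoc_of_le ht.le]
    have h1 : IntegrableOn (fun r => M * (|κ * r ^ (κ - 1)| • g (r ^ κ))) (Set.Ioo 0 t) :=
      hGintIoo.const_mul M
    have h2 : IntegrableOn G (Set.Ioo 0 t) := by
      refine h1.congr_fun (fun r hr => ?_) measurableSet_Ioo
      simp only [hG, habs r hr, smul_eq_mul]
    exact h2.congr_set_ae MeasureTheory.Ioo_ae_eq_Ioc.symm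
  -- pointwise bound
  have key : ∀ r ∈ Set.Ioo (0:ℝ) t,
      ‖φ₁ (((T - r ^ κ) ^ (1 / κ) : ℝ) * Complex.exp (θ * Complex.I))
        * φ₂ ((r : ℝ) * Complex.exp (θ * Complex.I))
        * Complex.exp (κ * θ * Complex.I) * ((κ : ℂ) * (r : ℂ) ^ ((κ : ℂ) - 1))‖ ≤ G r := by
    intro r hr
    obtain ⟨hr0, hrt⟩ := hr
    have hX : 0 < T - r ^ κ := sub_pos.2 (Real.rpow_lt_rpow hr0.le hrt hκ)
    have hρ : 0 < (T - r ^ κ) ^ (1 / κ) := Real.rpow_pos_of_pos hX _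
    have b1 := hb₁ _ hρ
    have b2 := hb₂ r hr0
    have hXκ : ((T - r ^ κ) ^ (1 / κ)) ^ κ = T - r ^ κ := by
      rw [← Real.rpow_mul hX.le, one_div_mul_cancel hκ', Real.rpow_one]
    have hXs : ((T - r ^ κ) ^ (1 / κ)) ^ (s₁ - κ) = (T - r ^ κ) ^ (a - 1) := by
      rw [← Real.rpow_mul hX.le]
      congr 1
      field_simp [hadef]
      linarith [show κ * a = s₁ by rw [hadef]; field_simp]
    rw [hXκ, hXs] at b1
    have hrs : r ^ (s₂ - κ) = (r ^ κ) ^ (b - 1) := by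
      rw [← Real.rpow_mul hr0.le]
      congr 1
      field_simp [hbdef]
      linarith [show κ * b = s₂ by rw [hbdef]; field_simp]
    rw [hrs] at b2
    have hnorm : ‖φ₁ (((T - r ^ κ) ^ (1 / κ) : ℝ) * Complex.exp (θ * Complex.I))
        * φ₂ ((r : ℝ) * Complex.exp (θ * Complex.I))
        * Complex.exp (κ * θ * Complex.I) * ((κ : ℂ) * (r : ℂ) ^ ((κ : ℂ) - 1))‖
        = ‖φ₁ (((T - r ^ κ) ^ (1 / κ) : ℝ) * Complex.exp (θ * Complex.I))‖
          * ‖φ₂ ((r : ℝ) * Complex.exp (θ * Complex.I))‖ * (κ * r ^ (κ - 1)) := by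
      rw [norm_mul, norm_mul, norm_mul, norm_mul]
      have h1 : ‖Complex.exp ((κ : ℂ) * θ * Complex.I)‖ = 1 := by
        rw [Complex.norm_exp]
        simp
      have h2 : ‖((r : ℂ)) ^ ((κ : ℂ) - 1)‖ = r ^ (κ - 1) := by
        rw [Complex.norm_cpow_eq_rpow_re_of_pos hr0]
        simp
      rw [h1, h2]
      simp [abs_of_pos hκ]
      try ring
    rw [hnorm]
    have hfac : 0 < κ * r ^ (κ - 1) := mul_pos hκ (Real.rpow_pos_of_pos hr0 _)
    calc ‖φ₁ (((T - r ^ κ) ^ (1 / κ) : ℝ) * Complex.exp (θ * Complex.I))‖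
          * ‖φ₂ ((r : ℝ) * Complex.exp (θ * Complex.I))‖ * (κ * r ^ (κ - 1))
        ≤ (C₁ * (T - r ^ κ) ^ (a - 1) * Real.exp (c * ((T - r ^ κ))) / Real.Gamma a)
          * (C₂ * (r ^ κ) ^ (b - 1) * Real.exp (c * r ^ κ) / Real.Gamma b)
          * (κ * r ^ (κ - 1)) := by
          have hA : 0 ≤ C₂ * (r ^ κ) ^ (b - 1) * Real.exp (c * r ^ κ) / Real.Gamma b := by
            positivity
          exact mul_le_mul (mul_le_mul b1 b2 (norm_nonneg _) (by positivity))
            le_rfl hfac.le (by positivity)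
      _ = G r := by
          have hexp : Real.exp (c * (T - r ^ κ)) * Real.exp (c * r ^ κ) = Real.exp (c * T) := by
            rw [← Real.exp_add]
            congr 1
            ring
          simp only [hG, hg, hM]
          field_simp
          ring_nf at hexp ⊢
          linear_combination (C₁ * C₂ : ℝ) * hexp
  -- assemble
  have hbound : ‖∫ r in (0:ℝ)..t,
      φ₁ (((T - r ^ κ) ^ (1 / κ) : ℝ) * Complex.exp (θ * Complex.I))
        * φ₂ ((r : ℝ) * Complex.exp (θ * Complex.I))
        * Complex.exp (κ * θ * Complex.I) * ((κ : ℂ) * (r : ℂ) ^ ((κ : ℂ) - 1))‖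
      ≤ |∫ r in (0:ℝ)..t, G r| := by
    apply intervalIntegral.norm_integral_le_abs_of_norm_le _ hGint
    rw [Set.uIoc_of_le ht.le, ← Measure.restrict_congr_set MeasureTheory.Ioo_ae_eq_Ioc]
    filter_upwards [ae_restrict_mem measurableSet_Ioo] with r hr
    exact key r hr
  have hGval : ∫ r in (0:ℝ)..t, G r
      = M * (T ^ (a + b - 1) * (Real.Gamma a * Real.Gamma b) / Real.Gamma (a + b)) := by
    rw [hG]
    rw [intervalIntegral.integral_const_mul]
    congr 1
    rw [intervalIntegral.integral_of_le ht.le, MeasureTheory.integral_Ioc_eq_integral_Ioo]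
    rw [show (∫ r in Set.Ioo (0:ℝ) t, (κ * r ^ (κ - 1)) * g (r ^ κ))
        = ∫ r in Set.Ioo (0:ℝ) t, |κ * r ^ (κ - 1)| • g (r ^ κ) from
      setIntegral_congr_fun measurableSet_Ioo (fun r hr => by rw [habs r hr, smul_eq_mul])]
    rw [← himg, ← MeasureTheory.integral_Ioc_eq_integral_Ioo,
      ← intervalIntegral.integral_of_le hT.le]
    exact beta_aux ha hb hT
  have hfin : M * (T ^ (a + b - 1) * (Real.Gamma a * Real.Gamma b) / Real.Gamma (a + b))
      = C₁ * C₂ * t ^ (s₁ + s₂ - κ) * Real.exp (c * T) / Real.Gamma ((s₁ + s₂) / κ) := by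
    have h1 : T ^ (a + b - 1) = t ^ (s₁ + s₂ - κ) := by
      rw [hTdef, ← Real.rpow_mul ht.le]
      congr 1
      field_simp [hadef, hbdef]
      linarith [show κ * a = s₁ by rw [hadef]; field_simp, show κ * b = s₂ by rw [hbdef]; field_simp]
    have h2 : (s₁ + s₂) / κ = a + b := by
      rw [hadef, hbdef, ← add_div]
    rw [h1, h2, hM]
    field_simp
  calc ‖∫ r in (0:ℝ)..t,
      φ₁ (((T - r ^ κ) ^ (1 / κ) : ℝ) * Complex.exp (θ * Complex.I))
        * φ₂ ((r : ℝ) * Complex.exp (θ * Complex.I))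
        * Complex.exp (κ * θ * Complex.I) * ((κ : ℂ) * (r : ℂ) ^ ((κ : ℂ) - 1))‖
      ≤ |∫ r in (0:ℝ)..t, G r| := hbound
    _ = C₁ * C₂ * t ^ (s₁ + s₂ - κ) * Real.exp (c * T) / Real.Gamma ((s₁ + s₂) / κ) := by
        rw [hGval, hfin]
        exact abs_of_nonneg (by positivity)
end

section
/- Let κ > 0, c ≥ 0, A > 0. Define for m ≥ 1 the functions g_m(ξ) = A^m |ξ|^{m−κ} e^{c|ξ|^κ}/Γ(m/κ) on (0, ∞). Then the series Σ_{m=1}^∞ g_m(ξ) converges for every ξ > 0, and there exist constants M > 0 and c' ≥ c such that Σ_{m=1}^∞ g_m(ξ) ≤ M |ξ|^{1−κ} e^{c'|ξ|^κ} for all ξ > 0. -/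
open Real MeasureTheory Set

lemma gamma_ge (s u : ℝ) (hs : 0 < s) (hu : 0 < u) :
    u ^ s * Real.exp (-u) ≤ Real.Gamma (s + 1) := by
  rw [Real.Gamma_eq_integral (by linarith), add_sub_cancel_right]
  have hint : IntegrableOn (fun x : ℝ => exp (-x) * x ^ s) (Ioi 0) := by
    have := Real.GammaIntegral_convergent (s := s + 1) (by linarith)
    simpa [add_sub_cancel_right] using this
  have h1 : ∫ x in Ioi u, exp (-x) * x ^ s ≤ ∫ x in Ioi 0, exp (-x) * x ^ s := by
    apply setIntegral_mono_set hint
    · filter_upwards [ae_restrict_mem measurableSet_Ioi] with x hx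
      exact mul_nonneg (exp_nonneg _) (rpow_nonneg hx.le s)
    · exact Filter.Eventually.of_forall (Ioi_subset_Ioi hu.le)
  refine le_trans ?_ h1
  have h2 : ∫ x in Ioi u, exp (-x) * u ^ s ≤ ∫ x in Ioi u, exp (-x) * x ^ s := by
    apply setIntegral_mono_on
    · have hexp : IntegrableOn (fun x : ℝ => exp (-x)) (Ioi u) := by
        simpa using exp_neg_integrableOn_Ioi u one_pos
      exact hexp.mul_const _
    · exact hint.mono_set (Ioi_subset_Ioi hu.le)
    · exact measurableSet_Ioi
    · intro x hx
      exact mul_le_mul_of_nonneg_left (rpow_le_rpow hu.le (le_of_lt hx) hs.le) (exp_nonneg _)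
  calc u ^ s * exp (-u) = ∫ x in Ioi u, exp (-x) * u ^ s := by
        rw [MeasureTheory.integral_mul_const, integral_exp_neg_Ioi, mul_comm]
    _ ≤ _ := h2

lemma key_bound (κ : ℝ) (hκ : 0 < κ) (t : ℝ) (ht : 0 < t) (m : ℕ) :
    t ^ (m + 1) / Real.Gamma (((m : ℝ) + 1) / κ)
      ≤ (((m : ℝ) + 1) / κ) * (1 / 2 : ℝ) ^ (m + 1) * Real.exp ((2 * t) ^ κ) := by
  set s : ℝ := ((m : ℝ) + 1) / κ with hs_def
  have hm1 : (0 : ℝ) < (m : ℝ) + 1 := by positivity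
  have hs : 0 < s := by positivity
  have h2t : (0 : ℝ) < 2 * t := by linarith
  have hu : (0 : ℝ) < (2 * t) ^ κ := rpow_pos_of_pos h2t κ
  have hΓ : 0 < Real.Gamma s := Real.Gamma_pos_of_pos hs
  have hge := gamma_ge s ((2 * t) ^ κ) hs hu
  rw [Real.Gamma_add_one (ne_of_gt hs)] at hge
  have hus : ((2 * t) ^ κ) ^ s = (2 * t) ^ (m + 1) := by
    rw [← Real.rpow_natCast (2 * t) (m + 1), ← Real.rpow_mul h2t.le]
    congr 1
    push_cast
    rw [mul_comm, div_mul_cancel₀ _ (ne_of_gt hκ)]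
  rw [hus] at hge
  -- hge : (2*t)^(m+1) * exp (-(2*t)^κ) ≤ s * Gamma s
  rw [div_le_iff₀ hΓ]
  have hmul := mul_le_mul_of_nonneg_right hge
    (by positivity : (0 : ℝ) ≤ Real.exp ((2 * t) ^ κ) * (1 / 2 : ℝ) ^ (m + 1))
  calc t ^ (m + 1)
      = (2 * t) ^ (m + 1) * Real.exp (-(2 * t) ^ κ) *
          (Real.exp ((2 * t) ^ κ) * (1 / 2 : ℝ) ^ (m + 1)) := by
        rw [Real.exp_neg]
        have he : Real.exp ((2 * t) ^ κ) ≠ 0 := (Real.exp_pos _).ne'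
        field_simp
        rw [← mul_pow, show 2 * t * (1 / 2 : ℝ) = t by ring]
    _ ≤ s * Real.Gamma s * (Real.exp ((2 * t) ^ κ) * (1 / 2 : ℝ) ^ (m + 1)) := hmul
    _ = s * (1 / 2 : ℝ) ^ (m + 1) * Real.exp ((2 * t) ^ κ) * Real.Gamma s := by ring

/-- Summation of the Gevrey-type majorant series: for κ > 0, c ≥ 0, A > 0, the series
Σ_{m≥1} A^m ξ^{m−κ} e^{cξ^κ}/Γ(m/κ) converges for each ξ > 0 and admits a uniform
bound M ξ^{1−κ} e^{c'ξ^κ}. -/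
theorem stmt_2 (κ c A : ℝ) (hκ : 0 < κ) (hc : 0 ≤ c) (hA : 0 < A) :
    (∀ ξ : ℝ, 0 < ξ →
        Summable (fun m : ℕ =>
          A ^ (m + 1) * ξ ^ ((m + 1 : ℝ) - κ) * Real.exp (c * ξ ^ κ)
            / Real.Gamma ((m + 1) / κ))) ∧
    ∃ M : ℝ, 0 < M ∧ ∃ c' : ℝ, c ≤ c' ∧ ∀ ξ : ℝ, 0 < ξ →
      (∑' m : ℕ,
          A ^ (m + 1) * ξ ^ ((m + 1 : ℝ) - κ) * Real.exp (c * ξ ^ κ)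
            / Real.Gamma ((m + 1) / κ))
        ≤ M * ξ ^ ((1 : ℝ) - κ) * Real.exp (c' * ξ ^ κ) := by
  set B : ℝ := 2 * max A 1 with hB_def
  have hB : 0 < B := by positivity
  have hAB : A ≤ B / 2 := by
    rw [hB_def]; rw [mul_div_cancel_left₀ _ (two_ne_zero)]; exact le_max_left A 1
  set c' : ℝ := c + (2 * A) ^ κ with hc'_def
  have hc' : c ≤ c' := by
    have : (0:ℝ) ≤ (2*A)^κ := rpow_nonneg (by linarith) κ
    linarith
  set M0 : ℝ := 1 / κ + 2 * A * Real.exp (B ^ κ) / (B * κ) with hM0_def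
  have hM0 : 0 < M0 := by positivity
  set g : ℕ → ℝ := fun m => ((m : ℝ) + 1) * (1 / 2 : ℝ) ^ (m + 1) with hg_def
  have hg : Summable g := by
    have h1 : Summable (fun m : ℕ => (m : ℝ) * (1 / 2) ^ m) := by
      simpa using summable_pow_mul_geometric_of_norm_lt_one (R := ℝ) (k := 1)
        (r := 1 / 2) (by norm_num)
    have h2 : Summable (fun m : ℕ => ((1 : ℝ) / 2) ^ m) :=
      summable_geometric_of_lt_one (by norm_num) (by norm_num)
    have h3 := (h1.add h2).mul_left (1 / 2 : ℝ)
    exact h3.congr fun m => by simp only [hg_def, pow_succ]; ring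
  set D : ℝ := ∑' m, g m with hD_def
  have hgpos : ∀ m, 0 < g m := fun m => by positivity
  have hD : 0 < D := lt_of_lt_of_le (hgpos 0) (Summable.le_tsum hg 0 fun i _ => (hgpos i).le)
  -- master pointwise bound
  have hmaster : ∀ ξ : ℝ, 0 < ξ → ∀ m : ℕ,
      A ^ (m + 1) * ξ ^ ((m + 1 : ℝ) - κ) * Real.exp (c * ξ ^ κ)
          / Real.Gamma ((m + 1) / κ)
        ≤ (M0 * ξ ^ ((1 : ℝ) - κ) * Real.exp (c' * ξ ^ κ)) * g m := by
    intro ξ hξ m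
    have hξκ : 0 < ξ ^ κ := rpow_pos_of_pos hξ κ
    have ht : 0 < A * ξ := by positivity
    have hΓ : 0 < Real.Gamma (((m : ℝ) + 1) / κ) := Real.Gamma_pos_of_pos (by positivity)
    have hterm_eq : A ^ (m + 1) * ξ ^ ((m + 1 : ℝ) - κ) * Real.exp (c * ξ ^ κ)
          / Real.Gamma (((m : ℝ) + 1) / κ)
        = (A * ξ) ^ (m + 1) / Real.Gamma (((m : ℝ) + 1) / κ)
            * (ξ ^ (-κ) * Real.exp (c * ξ ^ κ)) := by
      rw [show ((m : ℝ) + 1) - κ = ((m + 1 : ℕ) : ℝ) + (-κ) by push_cast; ring,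
        Real.rpow_add hξ, Real.rpow_natCast, mul_pow]
      ring
    rw [hterm_eq]
    have hξ1κ : ξ ^ ((1:ℝ) - κ) = ξ * ξ ^ (-κ) := by
      rw [show (1:ℝ) - κ = 1 + (-κ) by ring, Real.rpow_add hξ, Real.rpow_one]
    rcases le_or_gt ξ 1 with hξle | hξgt
    · -- small ξ
      have htB : A * ξ ≤ B / 2 := by
        calc A * ξ ≤ A * 1 := by nlinarith
          _ = A := mul_one A
          _ ≤ B / 2 := hAB
      have hkeyB := key_bound κ hκ (B / 2) (by positivity) m
      rw [show 2 * (B / 2) = B by ring] at hkeyB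
      have hstep : (A * ξ) ^ (m + 1) / Real.Gamma (((m : ℝ) + 1) / κ)
          ≤ (A * ξ) * ((2 / B) * ((((m : ℝ) + 1) / κ) * (1 / 2 : ℝ) ^ (m + 1)
              * Real.exp (B ^ κ))) := by
        have h1 : (A * ξ) ^ (m + 1) ≤ (A * ξ) * (B / 2) ^ m := by
          rw [pow_succ']
          exact mul_le_mul_of_nonneg_left (pow_le_pow_left₀ ht.le htB m) ht.le
        have h2 : (B / 2) ^ m / Real.Gamma (((m : ℝ) + 1) / κ)
            ≤ (2 / B) * ((((m : ℝ) + 1) / κ) * (1 / 2 : ℝ) ^ (m + 1) * Real.exp (B ^ κ)) := by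
          have h3 : (B / 2) ^ m = (B / 2) ^ (m + 1) * (2 / B) := by
            rw [pow_succ]; field_simp
          rw [div_le_iff₀ hΓ] at hkeyB ⊢
          calc (B / 2) ^ m = (B / 2) ^ (m + 1) * (2 / B) := h3
            _ ≤ (((m : ℝ) + 1) / κ) * (1 / 2 : ℝ) ^ (m + 1) * Real.exp (B ^ κ)
                  * Real.Gamma (((m : ℝ) + 1) / κ) * (2 / B) := by
                exact mul_le_mul_of_nonneg_right hkeyB (by positivity)
            _ = 2 / B * ((((m : ℝ) + 1) / κ) * (1 / 2 : ℝ) ^ (m + 1) * Real.exp (B ^ κ))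
                  * Real.Gamma (((m : ℝ) + 1) / κ) := by ring
        calc (A * ξ) ^ (m + 1) / Real.Gamma (((m : ℝ) + 1) / κ)
            ≤ (A * ξ) * (B / 2) ^ m / Real.Gamma (((m : ℝ) + 1) / κ) := by
              gcongr
          _ = (A * ξ) * ((B / 2) ^ m / Real.Gamma (((m : ℝ) + 1) / κ)) := by ring
          _ ≤ (A * ξ) * ((2 / B) * ((((m : ℝ) + 1) / κ) * (1 / 2 : ℝ) ^ (m + 1)
                * Real.exp (B ^ κ))) := by
              exact mul_le_mul_of_nonneg_left h2 ht.le
      calc (A * ξ) ^ (m + 1) / Real.Gamma (((m : ℝ) + 1) / κ)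
            * (ξ ^ (-κ) * Real.exp (c * ξ ^ κ))
          ≤ (A * ξ) * ((2 / B) * ((((m : ℝ) + 1) / κ) * (1 / 2 : ℝ) ^ (m + 1)
              * Real.exp (B ^ κ))) * (ξ ^ (-κ) * Real.exp (c * ξ ^ κ)) := by
            apply mul_le_mul_of_nonneg_right hstep
            positivity
        _ = (2 * A * Real.exp (B ^ κ) / (B * κ) * (ξ * ξ ^ (-κ))
              * Real.exp (c * ξ ^ κ)) * g m := by
            rw [hg_def]; field_simp
        _ ≤ (M0 * ξ ^ ((1:ℝ) - κ) * Real.exp (c' * ξ ^ κ)) * g m := by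
            rw [← hξ1κ]
            apply mul_le_mul_of_nonneg_right _ (hgpos m).le
            have hexp : Real.exp (c * ξ ^ κ) ≤ Real.exp (c' * ξ ^ κ) :=
              Real.exp_le_exp.mpr (by nlinarith [hξκ.le])
            have hM0ge : 2 * A * Real.exp (B ^ κ) / (B * κ) ≤ M0 := by
              rw [hM0_def]
              have : (0:ℝ) < 1 / κ := by positivity
              linarith
            have hξpow : (0:ℝ) ≤ ξ ^ ((1:ℝ) - κ) := (rpow_pos_of_pos hξ _).le
            calc 2 * A * Real.exp (B ^ κ) / (B * κ) * ξ ^ ((1:ℝ) - κ)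
                  * Real.exp (c * ξ ^ κ)
                ≤ 2 * A * Real.exp (B ^ κ) / (B * κ) * ξ ^ ((1:ℝ) - κ)
                  * Real.exp (c' * ξ ^ κ) := by
                  apply mul_le_mul_of_nonneg_left hexp
                  positivity
              _ ≤ M0 * ξ ^ ((1:ℝ) - κ) * Real.exp (c' * ξ ^ κ) := by
                  apply mul_le_mul_of_nonneg_right
                  · exact mul_le_mul_of_nonneg_right hM0ge hξpow
                  · positivity
    · -- large ξ
      have hkey := key_bound κ hκ (A * ξ) ht m
      have h2t : (2 * (A * ξ)) = (2 * A) * ξ := by ring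
      rw [h2t, Real.mul_rpow (by linarith : (0:ℝ) ≤ 2 * A) hξ.le] at hkey
      have hξmono : ξ ^ (-κ) ≤ ξ ^ ((1:ℝ) - κ) :=
        Real.rpow_le_rpow_of_exponent_le hξgt.le (by linarith)
      calc (A * ξ) ^ (m + 1) / Real.Gamma (((m : ℝ) + 1) / κ)
            * (ξ ^ (-κ) * Real.exp (c * ξ ^ κ))
          ≤ ((((m : ℝ) + 1) / κ) * (1 / 2 : ℝ) ^ (m + 1)
              * Real.exp ((2 * A) ^ κ * ξ ^ κ)) * (ξ ^ (-κ) * Real.exp (c * ξ ^ κ)) := by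
            apply mul_le_mul_of_nonneg_right hkey
            positivity
        _ = (1 / κ * ξ ^ (-κ) * Real.exp (c' * ξ ^ κ)) * g m := by
            rw [hg_def, hc'_def, add_mul, Real.exp_add]
            field_simp
        _ ≤ (M0 * ξ ^ ((1:ℝ) - κ) * Real.exp (c' * ξ ^ κ)) * g m := by
            apply mul_le_mul_of_nonneg_right _ (hgpos m).le
            apply mul_le_mul_of_nonneg_right _ (Real.exp_pos _).le
            have h1κ : 1 / κ ≤ M0 := by
              rw [hM0_def]
              have : (0:ℝ) ≤ 2 * A * Real.exp (B ^ κ) / (B * κ) := by positivity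
              linarith
            calc 1 / κ * ξ ^ (-κ) ≤ 1 / κ * ξ ^ ((1:ℝ) - κ) := by
                  apply mul_le_mul_of_nonneg_left hξmono (by positivity)
              _ ≤ M0 * ξ ^ ((1:ℝ) - κ) := by
                  apply mul_le_mul_of_nonneg_right h1κ (rpow_pos_of_pos hξ _).le
  have hsummable : ∀ ξ : ℝ, 0 < ξ →
      Summable (fun m : ℕ =>
        A ^ (m + 1) * ξ ^ ((m + 1 : ℝ) - κ) * Real.exp (c * ξ ^ κ)
          / Real.Gamma ((m + 1) / κ)) := by
    intro ξ hξ
    apply Summable.of_nonneg_of_le _ (hmaster ξ hξ) (hg.mul_left _)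
    intro m
    have hΓ : 0 < Real.Gamma (((m : ℝ) + 1) / κ) := Real.Gamma_pos_of_pos (by positivity)
    positivity
  refine ⟨hsummable, M0 * D, by positivity, c', hc', fun ξ hξ => ?_⟩
  calc (∑' m : ℕ, A ^ (m + 1) * ξ ^ ((m + 1 : ℝ) - κ) * Real.exp (c * ξ ^ κ)
          / Real.Gamma ((m + 1) / κ))
      ≤ ∑' m : ℕ, (M0 * ξ ^ ((1:ℝ) - κ) * Real.exp (c' * ξ ^ κ)) * g m :=
        Summable.tsum_le_tsum (hmaster ξ hξ) (hsummable ξ hξ) (hg.mul_left _)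
    _ = (M0 * ξ ^ ((1:ℝ) - κ) * Real.exp (c' * ξ ^ κ)) * D := tsum_mul_left
    _ = M0 * D * ξ ^ ((1:ℝ) - κ) * Real.exp (c' * ξ ^ κ) := by ring
end
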